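/- Let N < M be rank-2 oriented matroids on [n] such that M covers N in the weak map order. Then μ^{-1}(N) is contained in the boundary of the closure of μ^{-1}(M) in Gr(2, ℝ^n), where μ: Gr(2,ℝ^n) → MacP(2,n) sends a 2-plane to the rank-2 oriented matroid it determines. -/

import Mathlib

/-- A rank-2 chirotope on `n` elements: a nonzero alternating sign function on pairs
satisfying the rank-2 Grassmann–Plücker relations.  A rank-2 oriented matroid is such a
chirotope up to global sign. -/
structure Chirotope2 (n : ℕ) : Type where
  χ : Fin n → Fin n → SignType
  nonzero : ∃ i j, χ i j ≠ 0
  alt : ∀ i j, χ i j = - χ j i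
  gp : ∀ x y0 y1 y2 : Fin n,
    (χ y0 x * χ y1 y2 = 0 ∧ χ y1 x * χ y0 y2 = 0 ∧ χ y2 x * χ y0 y1 = 0) ∨
    ((χ y0 x * χ y1 y2 = 1 ∨ -(χ y1 x * χ y0 y2) = 1 ∨ χ y2 x * χ y0 y1 = 1) ∧
     (χ y0 x * χ y1 y2 = -1 ∨ -(χ y1 x * χ y0 y2) = -1 ∨ χ y2 x * χ y0 y1 = -1))

/-- The weak map order on rank-2 oriented matroids: `N ≤ M` iff, for a suitable global sign,
every basis of `N` is a basis of `M` with matching orientation. -/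
def omLe {n : ℕ} (N M : Chirotope2 n) : Prop :=
  ∃ ε : SignType, (ε = 1 ∨ ε = -1) ∧ ∀ i j, N.χ i j = 0 ∨ N.χ i j = ε * M.χ i j

/-- Strict weak map order. -/
def omLt {n : ℕ} (N M : Chirotope2 n) : Prop := omLe N M ∧ ¬ omLe M N

/-- Two chirotopes determine the same oriented matroid. -/
def omEquiv {n : ℕ} (N M : Chirotope2 n) : Prop := omLe N M ∧ omLe M N

/-- `M` covers `N` in the weak map order: `N < M` and nothing lies strictly between. -/
def OMCovers {n : ℕ} (N M : Chirotope2 n) : Prop :=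
  omLt N M ∧ ∀ N' : Chirotope2 n, omLt N N' → ¬ omLt N' M

/-- `i` is a loop of `M`. -/
def IsLoop {n : ℕ} (M : Chirotope2 n) (i : Fin n) : Prop := ∀ k, M.χ i k = 0

/-- The parallel/anti-parallel class of `i` in `M`. -/
def ParClass {n : ℕ} (M : Chirotope2 n) (i : Fin n) : Set (Fin n) :=
  {j | (∀ k, M.χ j k = M.χ i k) ∨ (∀ k, M.χ j k = - M.χ i k)}

/-- Two full-rank `2 × n` matrices are equivalent iff they have the same row space. -/
def grSetoid (n : ℕ) : Setoid {A : Matrix (Fin 2) (Fin n) ℝ // A.rank = 2} where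
  r A B := LinearMap.range (Matrix.vecMulLinear (A : Matrix (Fin 2) (Fin n) ℝ)) =
           LinearMap.range (Matrix.vecMulLinear (B : Matrix (Fin 2) (Fin n) ℝ))
  iseqv := ⟨fun _ => rfl, Eq.symm, Eq.trans⟩

/-- The Grassmannian `Gr(2, ℝⁿ)` of 2-dimensional subspaces of `ℝⁿ`, as the quotient of the
space of full-rank `2 × n` real matrices by row equivalence, with the quotient topology. -/
abbrev Gr2 (n : ℕ) := Quotient (grSetoid n)

/-- The chirotope of a `2 × n` matrix: `χ(i,j)` is the sign of the determinant of the
`2 × 2` submatrix with columns `i, j`. -/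
noncomputable def chiMat {n : ℕ} (A : Matrix (Fin 2) (Fin n) ℝ) (i j : Fin n) : SignType :=
  SignType.sign (A 0 i * A 1 j - A 0 j * A 1 i)

/-- The fiber `μ⁻¹(M) ⊆ Gr(2, ℝⁿ)` of a rank-2 oriented matroid `M` under the map `μ`
sending a 2-plane to the oriented matroid it determines (a chirotope up to global sign). -/
noncomputable def muFiber {n : ℕ} (M : Chirotope2 n) : Set (Gr2 n) :=
  {x | ∃ A : {A : Matrix (Fin 2) (Fin n) ℝ // A.rank = 2},
        x = Quotient.mk (grSetoid n) A ∧
        ((∀ i j, chiMat (A : Matrix (Fin 2) (Fin n) ℝ) i j = M.χ i j) ∨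
         (∀ i j, chiMat (A : Matrix (Fin 2) (Fin n) ℝ) i j = - M.χ i j))}



open Filter Topology

namespace GrBoundary

/-! ### SignType helpers -/

lemma st_cases (s : SignType) : s = 0 ∨ s = 1 ∨ s = -1 := by
  cases s
  · exact Or.inl rfl
  · exact Or.inr (Or.inr rfl)
  · exact Or.inr (Or.inl rfl)

lemma st_sq {s : SignType} (h : s ≠ 0) : s * s = 1 := by
  rcases st_cases s with h0 | h1 | h2 <;> subst_vars <;> first | exact absurd rfl h | decide

lemma st_neg_one {s : SignType} : -s = 1 ↔ s = -1 := by
  rcases st_cases s with h | h | h <;> subst_vars <;> decide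

lemma st_neg_neg_one {s : SignType} : -s = -1 ↔ s = 1 := by
  rcases st_cases s with h | h | h <;> subst_vars <;> decide

/-! ### Plane geometry -/

def cross (u w : ℝ × ℝ) : ℝ := u.1 * w.2 - w.1 * u.2
def dotp (u w : ℝ × ℝ) : ℝ := u.1 * w.1 + u.2 * w.2
def Jv (u : ℝ × ℝ) : ℝ × ℝ := (-u.2, u.1)

lemma cross_comm (u w : ℝ × ℝ) : cross u w = - cross w u := by unfold cross; ring

lemma cross_smul_left (a : ℝ) (u w : ℝ × ℝ) : cross (a • u) w = a * cross u w := by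
  simp [cross, Prod.smul_fst, Prod.smul_snd]; ring

lemma cross_smul_right (a : ℝ) (u w : ℝ × ℝ) : cross u (a • w) = a * cross u w := by
  simp [cross, Prod.smul_fst, Prod.smul_snd]; ring

lemma dotp_smul_left (a : ℝ) (u w : ℝ × ℝ) : dotp (a • u) w = a * dotp u w := by
  simp [dotp, Prod.smul_fst, Prod.smul_snd]; ring

lemma dotp_smul_right (a : ℝ) (u w : ℝ × ℝ) : dotp u (a • w) = a * dotp u w := by
  simp [dotp, Prod.smul_fst, Prod.smul_snd]; ring

lemma dotp_self_pos {u : ℝ × ℝ} (h : u ≠ 0) : 0 < dotp u u := by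
  have h1 : u.1 ≠ 0 ∨ u.2 ≠ 0 := by
    by_contra hc
    push_neg at hc
    exact h (Prod.ext hc.1 hc.2)
  rcases h1 with h1 | h1
  · have h2 := mul_self_nonneg u.2
    have h3 := mul_self_pos.mpr h1
    unfold dotp; nlinarith
  · have h2 := mul_self_nonneg u.1
    have h3 := mul_self_pos.mpr h1
    unfold dotp; nlinarith

/-- Cramer identity in the plane. -/
lemma cramer_id (x a b : ℝ × ℝ) :
    cross x b • a - cross x a • b = cross a b • x := by
  apply Prod.ext <;> simp [cross, Prod.smul_fst, Prod.smul_snd] <;> ring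

lemma cross_kill {x a b : ℝ × ℝ} (hab : cross a b ≠ 0) (hxa : cross x a = 0)
    (hxb : cross x b = 0) : x = 0 := by
  have h := cramer_id x a b
  rw [hxa, hxb] at h
  simp at h
  rcases smul_eq_zero.mp h.symm with h | h
  · exact absurd h hab
  · exact h

lemma cross_ratio {u w : ℝ × ℝ} (hu : u ≠ 0) (h : cross u w = 0) :
    ∃ c : ℝ, w = c • u := by
  by_cases h1 : u.1 ≠ 0
  · refine ⟨w.1 / u.1, ?_⟩
    apply Prod.ext
    · simp [Prod.smul_fst]; field_simp
    · simp [Prod.smul_snd]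
      field_simp
      simp [cross] at h
      nlinarith [h]
  · push_neg at h1
    have h2 : u.2 ≠ 0 := by
      intro h2; exact hu (Prod.ext h1 h2)
    refine ⟨w.2 / u.2, ?_⟩
    apply Prod.ext
    · simp [Prod.smul_fst]
      unfold cross at h
      rw [h1] at h
      have : w.1 * u.2 = 0 := by linarith
      rcases mul_eq_zero.mp this with h | h
      · simp [h, h1]
      · exact absurd h h2
    · simp [Prod.smul_snd]; field_simp

lemma cross_expand (u w : ℝ × ℝ) (a b : ℝ) :
    cross (u + a • Jv u) (w + b • Jv w) = (1 + a*b) * cross u w + (b - a) * dotp u w := by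
  simp [cross, dotp, Jv, Prod.smul_fst, Prod.smul_snd]
  ring


/-! ### Abstract rank-2 chirotope combinatorics -/

def GP {n : ℕ} (T : Fin n → Fin n → SignType) : Prop :=
  ∀ x y0 y1 y2 : Fin n,
    (T y0 x * T y1 y2 = 0 ∧ T y1 x * T y0 y2 = 0 ∧ T y2 x * T y0 y1 = 0) ∨
    ((T y0 x * T y1 y2 = 1 ∨ -(T y1 x * T y0 y2) = 1 ∨ T y2 x * T y0 y1 = 1) ∧
     (T y0 x * T y1 y2 = -1 ∨ -(T y1 x * T y0 y2) = -1 ∨ T y2 x * T y0 y1 = -1))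

variable {n : ℕ}

/-- Reorienting by signs `σ` (all nonzero) preserves the GP relations. -/
lemma GP.flip {T : Fin n → Fin n → SignType} (hgp : GP T) (σ : Fin n → SignType)
    (hσ : ∀ i, σ i ≠ 0) : GP (fun i j => σ i * σ j * T i j) := by
  intro x y0 y1 y2
  have key : ∀ (u a b c : SignType), u ≠ 0 →
      ((a = 0 ∧ b = 0 ∧ c = 0) ∨ ((a = 1 ∨ -b = 1 ∨ c = 1) ∧ (a = -1 ∨ -b = -1 ∨ c = -1))) →
      ((u*a = 0 ∧ u*b = 0 ∧ u*c = 0) ∨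
        ((u*a = 1 ∨ -(u*b) = 1 ∨ u*c = 1) ∧ (u*a = -1 ∨ -(u*b) = -1 ∨ u*c = -1))) := by
    intro u a b c hu h
    rcases st_cases u with h0 | h1 | h2
    · exact absurd h0 hu
    · subst h1; simpa using h
    · subst h2
      rcases h with ⟨ha, hb, hc⟩ | ⟨hp, hm⟩
      · subst ha; subst hb; subst hc; left; constructor <;> [skip; constructor] <;> decide
      · right
        constructor
        · rcases hm with h | h | h
          · left; rw [h]; decide
          · right; left
            have : b = 1 := st_neg_neg_one.mp h
            rw [this]; decide
          · right; right; rw [h]; decide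
        · rcases hp with h | h | h
          · left; rw [h]; decide
          · right; left
            have : b = -1 := st_neg_one.mp h
            rw [this]; decide
          · right; right; rw [h]; decide
  have u0 : σ x * σ y0 * σ y1 * σ y2 ≠ 0 := by
    simp only [mul_ne_zero_iff]
    exact ⟨⟨⟨hσ x, hσ y0⟩, hσ y1⟩, hσ y2⟩
  have e0 : (σ y0 * σ x * T y0 x) * (σ y1 * σ y2 * T y1 y2)
      = (σ x * σ y0 * σ y1 * σ y2) * (T y0 x * T y1 y2) := by ac_rfl
  have e1 : (σ y1 * σ x * T y1 x) * (σ y0 * σ y2 * T y0 y2)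
      = (σ x * σ y0 * σ y1 * σ y2) * (T y1 x * T y0 y2) := by ac_rfl
  have e2 : (σ y2 * σ x * T y2 x) * (σ y0 * σ y1 * T y0 y1)
      = (σ x * σ y0 * σ y1 * σ y2) * (T y2 x * T y0 y1) := by ac_rfl
  simp only [e0, e1, e2]
  exact key _ _ _ _ u0 (hgp x y0 y1 y2)

section Raw

variable {T : Fin n → Fin n → SignType}
  (halt : ∀ i j, T i j = - T j i) (hgp : GP T)

include halt in
lemma T_diag (i : Fin n) : T i i = 0 := by
  have := halt i i
  rcases st_cases (T i i) with h | h | h <;> rw [h] at this ⊢ <;> first | rfl | simp_all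

include hgp in
/-- Cross-multiplication identity for a parallel pair. -/
lemma mul_eq {i j : Fin n} (hij : T i j = 0) (k l : Fin n) :
    T i k * T j l = T j k * T i l := by
  rcases hgp k i j l with ⟨h1, h2, _⟩ | ⟨hp, hm⟩
  · rw [h1, h2]
  · rw [hij, mul_zero] at hp hm
    rcases hp with hp | hp | hp
    · rcases hm with hm | hm | hm
      · rw [hp] at hm; exact absurd hm (by decide)
      · rw [hp, st_neg_neg_one.mp hm]
      · exact absurd hm (by decide)
    · rcases hm with hm | hm | hm
      · rw [hm, st_neg_one.mp hp]
      · have hb2 := st_neg_neg_one.mp hm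
        rw [st_neg_one.mp hp] at hb2
        exact absurd hb2 (by decide)
      · exact absurd hm (by decide)
    · exact absurd hp (by decide)

def Nonloop (T : Fin n → Fin n → SignType) (i : Fin n) : Prop := ∃ k, T i k ≠ 0

include hgp in
/-- Parallel elements have proportional sign rows. -/
lemma par0 {i j : Fin n} (hi : Nonloop T i) (hj : Nonloop T j) (hij : T i j = 0) :
    ∃ s : SignType, s ≠ 0 ∧ ∀ k, T i k = s * T j k := by
  obtain ⟨l₀, hl₀⟩ := hj
  obtain ⟨m, hm⟩ := hi
  have hil₀ : T i l₀ ≠ 0 := by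
    intro hz
    have h1 := mul_eq hgp hij m l₀
    rw [hz, mul_zero] at h1
    exact (mul_ne_zero hm hl₀) h1
  refine ⟨T i l₀ * T j l₀, mul_ne_zero hil₀ hl₀, fun k => ?_⟩
  have h1 := mul_eq hgp hij k l₀
  calc T i k = T i k * (T j l₀ * T j l₀) := by rw [st_sq hl₀, mul_one]
    _ = (T i k * T j l₀) * T j l₀ := by ac_rfl
    _ = (T j k * T i l₀) * T j l₀ := by rw [h1]
    _ = T i l₀ * T j l₀ * T j k := by ac_rfl

end Raw


/-! ### Normalized context -/

structure Ctx (n : ℕ) where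
  T : Fin n → Fin n → SignType
  v : Fin n → ℝ × ℝ
  r : Fin n
  halt : ∀ i j, T i j = - T j i
  hgp : GP T
  hH : ∀ i j, SignType.sign (cross (v i) (v j)) = T i j ∨ SignType.sign (cross (v i) (v j)) = 0
  hex : ∃ p q, cross (v p) (v q) ≠ 0
  hvr : v r ≠ 0
  nrm1 : ∀ i, T r i ≠ -1
  nrm2 : ∀ i, Nonloop T i → T r i = 0 → ∀ k, T i k = T r k

namespace Ctx

variable {n : ℕ} (C : Ctx n)

lemma exact_H {i j : Fin n} (h : cross (C.v i) (C.v j) ≠ 0) :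
    SignType.sign (cross (C.v i) (C.v j)) = C.T i j := by
  rcases C.hH i j with h1 | h1
  · exact h1
  · exact absurd (sign_eq_zero_iff.mp h1) h

lemma hkill {i : Fin n} (h : ∀ j, cross (C.v i) (C.v j) = 0) : C.v i = 0 := by
  obtain ⟨p, q, hpq⟩ := C.hex
  exact cross_kill hpq (h p) (h q)

lemma loop_v {i : Fin n} (h : ¬ Nonloop C.T i) : C.v i = 0 := by
  apply C.hkill
  intro j
  rw [← sign_eq_zero_iff]
  rcases C.hH i j with h1 | h1
  · rw [h1]
    by_contra hne
    exact h ⟨j, hne⟩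
  · exact h1

lemma D_nonloop {i : Fin n} (h : C.v i ≠ 0) : Nonloop C.T i := by
  by_contra hc
  exact h (C.loop_v hc)

lemma r_nonloop : Nonloop C.T C.r := C.D_nonloop C.hvr

lemma Tflip {i j : Fin n} : C.T j i = - C.T i j := by rw [C.halt i j, neg_neg]

lemma nrm1' (i : Fin n) : C.T C.r i = 0 ∨ C.T C.r i = 1 := by
  rcases st_cases (C.T C.r i) with h | h | h
  · exact Or.inl h
  · exact Or.inr h
  · exact absurd h (C.nrm1 i)

/-- In the normalized context, parallel rows are equal (not just proportional). -/
lemma par {i j : Fin n} (hi : Nonloop C.T i) (hj : Nonloop C.T j) (hij : C.T i j = 0) :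
    ∀ k, C.T i k = C.T j k := by
  obtain ⟨s, hs, hsk⟩ := par0 C.hgp hi hj hij
  suffices hone : s = 1 by
    intro k; rw [hsk k, hone, one_mul]
  rcases C.nrm1' i with hri | hri
  · -- T r i = 0 : both parallel to r
    have hik := C.nrm2 i hi hri
    have hrj : C.T C.r j = 0 := by
      have := hik j
      rw [hij] at this
      rw [← this]
    have hjk := C.nrm2 j hj hrj
    obtain ⟨k, hk⟩ := C.r_nonloop
    have h1 : C.T C.r k = s * C.T C.r k := by
      conv_lhs => rw [← hik k]
      rw [hsk k, hjk k]
    rcases st_cases s with h | h | h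
    · exact absurd h hs
    · exact h
    · rw [h] at h1
      rcases st_cases (C.T C.r k) with h2 | h2 | h2 <;> rw [h2] at h1 hk <;>
        first | exact absurd rfl hk | exact absurd h1 (by decide)
  · -- T r i = 1
    have h1 : C.T C.r i = s * C.T C.r j := by
      have h2 := hsk C.r
      rw [C.Tflip (i := C.r) (j := i), C.Tflip (i := C.r) (j := j)] at h2
      have h3 : - C.T C.r i = - (s * C.T C.r j) := by
        rw [h2]
        rcases st_cases s with h | h | h <;> subst h <;>
          rcases st_cases (C.T C.r j) with h | h | h <;> rw [h] <;> decide
      exact neg_injective h3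
    rw [hri] at h1
    rcases C.nrm1' j with hrj | hrj <;> rw [hrj] at h1
    · rw [mul_zero] at h1; exact absurd h1.symm (by decide)
    · rw [mul_one] at h1; exact h1.symm

/-- Transitivity of the weak order `T i j ≠ -1`. -/
lemma trans {i j k : Fin n} (hi : Nonloop C.T i) (hj : Nonloop C.T j) (hk : Nonloop C.T k)
    (hij : C.T i j ≠ -1) (hjk : C.T j k ≠ -1) : C.T i k ≠ -1 := by
  intro hik
  rcases C.nrm1' j with hrj | hrj
  · -- j parallel to r
    have hjm := C.nrm2 j hj hrj
    have h1 : C.T i j = 0 := by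
      have h2 : C.T j i = C.T C.r i := hjm i
      rcases C.nrm1' i with h3 | h3 <;> rw [h3] at h2
      · rw [C.Tflip, h2]; rfl
      · exact absurd (by rw [C.Tflip, h2] : C.T i j = -1) hij
    have := C.par hi hj h1 k
    rw [this, hjm k] at hik
    exact C.nrm1 k hik
  · -- T r j = 1 : use GP with x := j, (y0,y1,y2) := (r, i, k)
    rcases C.hgp j C.r i k with ⟨h1, _, _⟩ | ⟨hp, _⟩
    · rw [hrj, hik] at h1
      exact absurd h1 (by decide)
    · rcases hp with hp | hp | hp
      · rw [hrj, hik] at hp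
        exact absurd hp (by decide)
      · -- -(T i j * T r k) = 1, but T i j ∈ {0,1} and T r k ∈ {0,1}
        rcases st_cases (C.T i j) with h2 | h2 | h2
        · rw [h2, zero_mul] at hp; exact absurd hp (by decide)
        · rcases C.nrm1' k with h3 | h3 <;> rw [h2, h3] at hp <;> exact absurd hp (by decide)
        · exact absurd h2 hij
      · -- T k j * T r i = 1, but T k j ∈ {0,-1} and T r i ∈ {0,1}
        have h4 : C.T k j = 0 ∨ C.T k j = -1 := by
          rw [C.Tflip]
          rcases st_cases (C.T j k) with h | h | h <;> rw [h]
          · exact Or.inl (by decide)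
          · exact Or.inr (by decide)
          · exact absurd h hjk
        rcases h4 with h4 | h4 <;> rcases C.nrm1' i with h5 | h5 <;>
          rw [h4, h5] at hp <;> exact absurd hp (by decide)

lemma strictrans {i j k : Fin n} (hi : Nonloop C.T i) (hj : Nonloop C.T j) (hk : Nonloop C.T k)
    (hij : C.T i j = 1) (hjk : C.T j k = 1) : C.T i k = 1 := by
  by_contra hc
  have hki : C.T k i ≠ -1 := by
    rw [C.Tflip]
    rcases st_cases (C.T i k) with h | h | h <;> rw [h] <;> first | decide | exact absurd h hc
  have h2 := C.trans hk hi hj hki (by rw [hij]; decide)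
  rw [C.Tflip, hjk] at h2
  exact h2 rfl

/-! ### Rank function -/

noncomputable def rho (i : Fin n) : ℕ := (Finset.univ.filter (fun k => C.T k i = 1)).card

lemma rho_le (i : Fin n) : C.rho i ≤ n := by
  have := Finset.card_filter_le (Finset.univ : Finset (Fin n)) (fun k => C.T k i = 1)
  simpa [rho] using this

lemma rho_lt {i j : Fin n} (hi : Nonloop C.T i) (hj : Nonloop C.T j) (hij : C.T i j = 1) :
    C.rho i < C.rho j := by
  apply Finset.card_lt_card
  constructor
  · intro k hk
    simp only [Finset.mem_filter, Finset.mem_univ, true_and] at hk ⊢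
    have hknl : Nonloop C.T k := ⟨i, by rw [hk]; decide⟩
    exact C.strictrans hknl hi hj hk hij
  · intro hsub
    have hmem : i ∈ Finset.univ.filter (fun k => C.T k j = 1) := by
      simp only [Finset.mem_filter, Finset.mem_univ, true_and]
      exact hij
    have := hsub hmem
    simp only [Finset.mem_filter, Finset.mem_univ, true_and] at this
    rw [T_diag C.halt i] at this
    exact absurd this (by decide)

lemma rho_eq {i j : Fin n} (hi : Nonloop C.T i) (hj : Nonloop C.T j) (hij : C.T i j = 0) :
    C.rho i = C.rho j := by
  unfold rho
  congr 1
  apply Finset.filter_congr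
  intro k _
  have hp := C.par hi hj hij
  have he : C.T k i = C.T k j := by
    calc C.T k i = - C.T i k := C.Tflip
      _ = - C.T j k := by rw [hp k]
      _ = C.T k j := C.Tflip.symm
  rw [he]

lemma sign_rho {i j : Fin n} (hi : Nonloop C.T i) (hj : Nonloop C.T j) :
    SignType.sign ((C.rho j : ℝ) - (C.rho i : ℝ)) = C.T i j := by
  rcases st_cases (C.T i j) with h | h | h <;> rw [h]
  · rw [C.rho_eq hi hj h]
    simp
  · have := C.rho_lt hi hj h
    apply sign_pos
    have : (C.rho i : ℝ) < C.rho j := by exact_mod_cast this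
    linarith
  · have h2 : C.T j i = 1 := by rw [C.Tflip, h]; decide
    have := C.rho_lt hj hi h2
    apply sign_neg
    have : (C.rho j : ℝ) < C.rho i := by exact_mod_cast this
    linarith


/-! ### Anchors -/

open scoped Classical in
noncomputable def Pset (x : Fin n) : Finset (Fin n) :=
  Finset.univ.filter (fun j => C.v j ≠ 0 ∧ C.T x j = 0)

open scoped Classical in
noncomputable def Lset (x : Fin n) : Finset (Fin n) :=
  Finset.univ.filter (fun j => C.v j ≠ 0 ∧ C.T j x = 1)

lemma Pset_mem {x j : Fin n} : j ∈ C.Pset x ↔ (C.v j ≠ 0 ∧ C.T x j = 0) := by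
  classical
  simp [Pset]

lemma Lset_mem {x j : Fin n} : j ∈ C.Lset x ↔ (C.v j ≠ 0 ∧ C.T j x = 1) := by
  classical
  simp [Lset]

noncomputable def amax (x : Fin n) : Fin n :=
  if h : ((C.Lset x).filter (fun j => ∀ k ∈ C.Lset x, C.rho k ≤ C.rho j)).Nonempty then
    ((C.Lset x).filter (fun j => ∀ k ∈ C.Lset x, C.rho k ≤ C.rho j)).min' h
  else C.r

lemma amax_spec {x : Fin n} (h : (C.Lset x).Nonempty) :
    C.amax x ∈ C.Lset x ∧ ∀ k ∈ C.Lset x, C.rho k ≤ C.rho (C.amax x) := by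
  have hne : ((C.Lset x).filter (fun j => ∀ k ∈ C.Lset x, C.rho k ≤ C.rho j)).Nonempty := by
    obtain ⟨b, hb, hmax⟩ := Finset.exists_max_image _ C.rho h
    exact ⟨b, Finset.mem_filter.mpr ⟨hb, hmax⟩⟩
  rw [amax, dif_pos hne]
  have := Finset.min'_mem _ hne
  rw [Finset.mem_filter] at this
  exact this

open scoped Classical in
noncomputable def src (x : Fin n) : Fin n :=
  if C.v x ≠ 0 ∨ ¬ Nonloop C.T x then x
  else if h : (C.Pset x).Nonempty then (C.Pset x).min' h
  else C.amax x

lemma src_self {x : Fin n} (h : C.v x ≠ 0) : C.src x = x := by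
  rw [src, if_pos (Or.inl h)]

lemma src_loop {x : Fin n} (h : ¬ Nonloop C.T x) : C.src x = x := by
  rw [src, if_pos (Or.inr h)]

lemma Lset_ne {x : Fin n} (hx : Nonloop C.T x) (hP : ¬ (C.Pset x).Nonempty) :
    (C.Lset x).Nonempty := by
  refine ⟨C.r, C.Lset_mem.mpr ⟨C.hvr, ?_⟩⟩
  rcases C.nrm1' x with h | h
  · exfalso
    apply hP
    refine ⟨C.r, C.Pset_mem.mpr ⟨C.hvr, ?_⟩⟩
    rw [C.Tflip, h]; rfl
  · exact h

lemma src_p {x : Fin n} (hx : Nonloop C.T x) (hvx : C.v x = 0)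
    (hP : (C.Pset x).Nonempty) : C.src x ∈ C.Pset x := by
  rw [src, if_neg (by push_neg; exact ⟨hvx, hx⟩), dif_pos hP]
  exact Finset.min'_mem _ hP

lemma src_l {x : Fin n} (hx : Nonloop C.T x) (hvx : C.v x = 0)
    (hP : ¬ (C.Pset x).Nonempty) :
    C.src x ∈ C.Lset x ∧ ∀ k ∈ C.Lset x, C.rho k ≤ C.rho (C.src x) := by
  rw [src, if_neg (by push_neg; exact ⟨hvx, hx⟩), dif_neg hP]
  exact C.amax_spec (C.Lset_ne hx hP)

lemma srcD {x : Fin n} (hx : Nonloop C.T x) : C.v (C.src x) ≠ 0 := by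
  by_cases hvx : C.v x = 0
  · by_cases hP : (C.Pset x).Nonempty
    · exact (C.Pset_mem.mp (C.src_p hx hvx hP)).1
    · exact (C.Lset_mem.mp (C.src_l hx hvx hP).1).1
  · rw [C.src_self hvx]; exact hvx

lemma src_nonloop {x : Fin n} (hx : Nonloop C.T x) : Nonloop C.T (C.src x) :=
  C.D_nonloop (C.srcD hx)

/-- Row transfer for a parallel anchor. -/
lemma p_row {x : Fin n} (hx : Nonloop C.T x) (hvx : C.v x = 0)
    (hP : (C.Pset x).Nonempty) : ∀ k, C.T x k = C.T (C.src x) k := by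
  have h0 := (C.Pset_mem.mp (C.src_p hx hvx hP)).2
  exact C.par hx (C.src_nonloop hx) h0

/-- Row transfer at realized points. -/
lemma transfer {x : Fin n} (hx : Nonloop C.T x) (k : Fin n) (hk : C.v k ≠ 0)
    (hcr : cross (C.v (C.src x)) (C.v k) ≠ 0) : C.T x k = C.T (C.src x) k := by
  by_cases hvx : C.v x = 0
  · by_cases hP : (C.Pset x).Nonempty
    · exact C.p_row hx hvx hP k
    · -- argmax case
      obtain ⟨hmem, hmax⟩ := C.src_l hx hvx hP
      obtain ⟨hva, hax⟩ := C.Lset_mem.mp hmem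
      have hknl : Nonloop C.T k := C.D_nonloop hk
      have hanl : Nonloop C.T (C.src x) := C.D_nonloop hva
      have hsak : SignType.sign (cross (C.v (C.src x)) (C.v k)) = C.T (C.src x) k :=
        C.exact_H hcr
      have hak0 : C.T (C.src x) k ≠ 0 := by
        rw [← hsak]
        simpa [sign_eq_zero_iff] using hcr
      rcases st_cases (C.T (C.src x) k) with h | h | h
      · exact absurd h hak0
      · -- T a k = 1 : show T x k = 1
        rcases st_cases (C.T x k) with h2 | h2 | h2
        · exact absurd (hP ⟨k, C.Pset_mem.mpr ⟨hk, h2⟩⟩) (by simp)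
        · rw [h2, h]
        · exfalso
          have hkx : C.T k x = 1 := by rw [C.Tflip, h2]; decide
          have hkL : k ∈ C.Lset x := C.Lset_mem.mpr ⟨hk, hkx⟩
          have h3 := hmax k hkL
          have h4 := C.rho_lt hanl hknl h
          omega
      · -- T a k = -1 : T k a = 1, strictrans
        have hka : C.T k (C.src x) = 1 := by rw [C.Tflip, h]; decide
        have := C.strictrans hknl hanl hx hka hax
        rw [h, C.Tflip, this]
  · rw [C.src_self hvx]

lemma cross_self (u : ℝ × ℝ) : cross u u = 0 := by unfold cross; ring

lemma A_DE {a y : Fin n} (ha : C.v a ≠ 0) (hy : Nonloop C.T y)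
    (hcr : cross (C.v a) (C.v (C.src y)) ≠ 0) : C.T a y = C.T a (C.src y) := by
  have h1 : C.T y a = C.T (C.src y) a := by
    by_cases hvy : C.v y = 0
    · by_cases hP : (C.Pset y).Nonempty
      · exact C.p_row hy hvy hP a
      · apply C.transfer hy a ha
        rw [cross_comm] at hcr
        simpa using hcr
    · rw [C.src_self hvy]
  calc C.T a y = - C.T y a := C.Tflip
    _ = - C.T (C.src y) a := by rw [h1]
    _ = C.T a (C.src y) := C.Tflip.symm

lemma src_congr {x y : Fin n} (hx : Nonloop C.T x) (hy : Nonloop C.T y)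
    (hvx : C.v x = 0) (hvy : C.v y = 0) (hrow : ∀ k, C.T x k = C.T y k) :
    C.src x = C.src y := by
  classical
  have hPeq : C.Pset x = C.Pset y := by
    unfold Pset
    apply Finset.filter_congr
    intro k _
    rw [hrow k]
  have hLeq : C.Lset x = C.Lset y := by
    unfold Lset
    apply Finset.filter_congr
    intro k _
    have : C.T k x = C.T k y := by
      calc C.T k x = - C.T x k := C.Tflip
        _ = - C.T y k := by rw [hrow k]
        _ = C.T k y := C.Tflip.symm
    rw [this]
  have hamax : C.amax x = C.amax y := by
    unfold amax
    rw [hLeq]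
  rw [src, src, if_neg (by push_neg; exact ⟨hvx, hx⟩), if_neg (by push_neg; exact ⟨hvy, hy⟩),
    hPeq, hamax]

/-- Master sign lemma: transversal pairs. -/
lemma A_master {i j : Fin n} (hi : Nonloop C.T i) (hj : Nonloop C.T j)
    (hcr : cross (C.v (C.src i)) (C.v (C.src j)) ≠ 0) :
    SignType.sign (cross (C.v (C.src i)) (C.v (C.src j))) = C.T i j := by
  have hva : C.v (C.src i) ≠ 0 := C.srcD hi
  have hvb : C.v (C.src j) ≠ 0 := C.srcD hj
  have hanl : Nonloop C.T (C.src i) := C.D_nonloop hva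
  have hbnl : Nonloop C.T (C.src j) := C.D_nonloop hvb
  have hsab : SignType.sign (cross (C.v (C.src i)) (C.v (C.src j))) = C.T (C.src i) (C.src j) :=
    C.exact_H hcr
  have hab0 : C.T (C.src i) (C.src j) ≠ 0 := by
    rw [← hsab]; simpa [sign_eq_zero_iff] using hcr
  -- Step 1: T a j = T a b
  have hstep1 : C.T (C.src i) j = C.T (C.src i) (C.src j) := C.A_DE hva hj hcr
  -- Step 2: T i j = T a j
  suffices hstep2 : C.T i j = C.T (C.src i) j by
    rw [hsab, hstep2, hstep1]
  by_cases hvi : C.v i = 0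
  · by_cases hPi : (C.Pset i).Nonempty
    · exact C.p_row hi hvi hPi j
    · obtain ⟨hmem, hmax⟩ := C.src_l hi hvi hPi
      obtain ⟨_, hai⟩ := C.Lset_mem.mp hmem
      have haj : C.T (C.src i) j ≠ 0 := by rw [hstep1]; exact hab0
      rcases st_cases (C.T (C.src i) j) with h | h | h
      · exact absurd h haj
      · -- T a j = 1 : show T i j = 1
        rcases st_cases (C.T i j) with h2 | h2 | h2
        · -- parallel: contradiction
          exfalso
          by_cases hvj : C.v j = 0
          · have := C.src_congr hi hj hvi hvj (C.par hi hj h2)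
            rw [this] at hcr
            exact hcr (cross_self _)
          · exact hPi ⟨j, C.Pset_mem.mpr ⟨hvj, h2⟩⟩
        · rw [h2, h]
        · -- T j i = 1 : contradiction via rho
          exfalso
          have hji : C.T j i = 1 := by rw [C.Tflip, h2]; decide
          have hbi : C.T (C.src j) i = 1 := by
            by_cases hvj : C.v j = 0
            · by_cases hPj : (C.Pset j).Nonempty
              · rw [← C.p_row hj hvj hPj i]; exact hji
              · obtain ⟨hmemj, _⟩ := C.src_l hj hvj hPj
                obtain ⟨_, hbj⟩ := C.Lset_mem.mp hmemj
                exact C.strictrans hbnl hj hi hbj hji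
            · rw [C.src_self hvj]; exact hji
          have hbL : C.src j ∈ C.Lset i := C.Lset_mem.mpr ⟨hvb, hbi⟩
          have h3 := hmax _ hbL
          have hab1 : C.T (C.src i) (C.src j) = 1 := by rw [← hstep1]; exact h
          have h4 := C.rho_lt hanl hbnl hab1
          omega
      · -- T a j = -1 : T j a = 1, strictrans j a i gives T j i = 1
        have hja : C.T j (C.src i) = 1 := by rw [C.Tflip, h]; decide
        have := C.strictrans hj hanl hi hja hai
        rw [h, C.Tflip, this]
  · rw [C.src_self hvi]


/-! ### The second-order ordering -/

noncomputable def theta (i : Fin n) : ℝ :=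
  (C.rho i : ℝ) - if dotp (C.v (C.src i)) (C.v C.r) < 0 then (2*(n:ℝ)+2) else 0

lemma cross_zero_right (u : ℝ × ℝ) : cross u 0 = 0 := by unfold cross; simp

lemma cross_zero_left (u : ℝ × ℝ) : cross 0 u = 0 := by unfold cross; simp

lemma k0_exists : ∃ k, C.v k ≠ 0 ∧ cross (C.v C.r) (C.v k) ≠ 0 := by
  obtain ⟨p, q, hpq⟩ := C.hex
  by_cases h : cross (C.v C.r) (C.v p) ≠ 0
  · refine ⟨p, ?_, h⟩
    intro h0
    rw [h0] at h
    exact h (cross_zero_right _)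
  · push_neg at h
    refine ⟨q, ?_, ?_⟩
    · intro h0
      rw [h0] at hpq
      exact hpq (cross_zero_right _)
    · intro h0
      exact C.hvr (cross_kill hpq h h0)

lemma sign_exact_one {a b : Fin n} (h : cross (C.v a) (C.v b) ≠ 0)
    (hb : C.T a b ≠ -1) : SignType.sign (cross (C.v a) (C.v b)) = 1 := by
  have h1 := C.exact_H h
  rcases st_cases (C.T a b) with h2 | h2 | h2
  · rw [h2] at h1
    exact absurd (sign_eq_zero_iff.mp h1) h
  · rw [h1, h2]
  · exact absurd h2 hb

/-- Master sign lemma: parallel pairs. -/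
lemma B_master {i j : Fin n} (hi : Nonloop C.T i) (hj : Nonloop C.T j)
    (hcr : cross (C.v (C.src i)) (C.v (C.src j)) = 0) :
    SignType.sign (C.theta j - C.theta i) *
      SignType.sign (dotp (C.v (C.src i)) (C.v (C.src j))) = C.T i j := by
  have hva : C.v (C.src i) ≠ 0 := C.srcD hi
  have hvb : C.v (C.src j) ≠ 0 := C.srcD hj
  obtain ⟨c, hc⟩ := cross_ratio hva hcr
  have hc0 : c ≠ 0 := by
    intro h
    rw [h, zero_smul] at hc
    exact hvb hc
  have hdot : dotp (C.v (C.src i)) (C.v (C.src j))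
      = c * dotp (C.v (C.src i)) (C.v (C.src i)) := by
    rw [hc, dotp_smul_right]
  have hpos := dotp_self_pos hva
  rcases lt_or_gt_of_ne hc0 with hcneg | hcpos
  · -- anti-parallel case
    have hdneg : dotp (C.v (C.src i)) (C.v (C.src j)) < 0 := by
      rw [hdot]; exact mul_neg_of_neg_of_pos hcneg hpos
    have hsd : SignType.sign (dotp (C.v (C.src i)) (C.v (C.src j))) = -1 := sign_neg hdneg
    -- the anchors lie on the r-line
    have hra : cross (C.v C.r) (C.v (C.src i)) = 0 := by
      by_contra hra
      have h1 : SignType.sign (cross (C.v C.r) (C.v (C.src i))) = 1 :=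
        C.sign_exact_one hra (C.nrm1 _)
      have h3 : cross (C.v C.r) (C.v (C.src j)) = c * cross (C.v C.r) (C.v (C.src i)) := by
        rw [hc, cross_smul_right]
      have h4 : SignType.sign (cross (C.v C.r) (C.v (C.src j))) = -1 := by
        rw [h3, sign_mul, sign_neg hcneg, h1, mul_one]
      have h5 : cross (C.v C.r) (C.v (C.src j)) ≠ 0 := by
        intro hz
        rw [hz, sign_zero] at h4
        exact absurd h4 (by decide)
      have h6 := C.exact_H h5
      rw [h4] at h6
      exact C.nrm1 _ h6.symm
    obtain ⟨κ, hκ⟩ := cross_ratio C.hvr hra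
    have hκ0 : κ ≠ 0 := by
      intro h
      rw [h, zero_smul] at hκ
      exact hva hκ
    have hdar : dotp (C.v (C.src i)) (C.v C.r) = κ * dotp (C.v C.r) (C.v C.r) := by
      rw [hκ, dotp_smul_left]
    have hdbr : dotp (C.v (C.src j)) (C.v C.r) = (c*κ) * dotp (C.v C.r) (C.v C.r) := by
      rw [hc, hκ, dotp_smul_left, dotp_smul_left]
      ring
    have hrpos := dotp_self_pos C.hvr
    obtain ⟨k₀, hk₀v, hk₀c⟩ := C.k0_exists
    have hk₀nl := C.D_nonloop hk₀v
    have hsr : SignType.sign (cross (C.v C.r) (C.v k₀)) = 1 :=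
      C.sign_exact_one hk₀c (C.nrm1 _)
    have hcak : cross (C.v (C.src i)) (C.v k₀) = κ * cross (C.v C.r) (C.v k₀) := by
      rw [hκ, cross_smul_left]
    have hcbk : cross (C.v (C.src j)) (C.v k₀) = (c*κ) * cross (C.v C.r) (C.v k₀) := by
      rw [hc, hκ, cross_smul_left, cross_smul_left]
      ring
    have hbound1 : (0:ℝ) ≤ (C.rho j : ℝ) := by positivity
    have hbound2 : (C.rho i : ℝ) ≤ n := by exact_mod_cast C.rho_le i
    have hbound1' : (0:ℝ) ≤ (C.rho i : ℝ) := by positivity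
    have hbound2' : (C.rho j : ℝ) ≤ n := by exact_mod_cast C.rho_le j
    rcases lt_or_gt_of_ne hκ0 with hκneg | hκpos
    · -- κ < 0 : T i j = -1
      have hcak0 : cross (C.v (C.src i)) (C.v k₀) ≠ 0 := by
        rw [hcak]
        exact mul_ne_zero (ne_of_lt hκneg) hk₀c
      have hcbk0 : cross (C.v (C.src j)) (C.v k₀) ≠ 0 := by
        rw [hcbk]
        exact mul_ne_zero (mul_ne_zero hc0 hκ0) hk₀c
      have hTik : C.T i k₀ = -1 := by
        rw [C.transfer hi k₀ hk₀v hcak0, ← C.exact_H hcak0, hcak, sign_mul, sign_neg hκneg,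
          hsr, mul_one]
      have hTjk : C.T j k₀ = 1 := by
        rw [C.transfer hj k₀ hk₀v hcbk0, ← C.exact_H hcbk0, hcbk, sign_mul,
          sign_pos (mul_pos_of_neg_of_neg hcneg hκneg), hsr, mul_one]
      have hTki : C.T k₀ i = 1 := by rw [C.Tflip, hTik]; decide
      have hTji : C.T j i = 1 := C.strictrans hj hk₀nl hi hTjk hTki
      have hTij : C.T i j = -1 := by rw [C.Tflip, hTji]; try decide
      have hfi : dotp (C.v (C.src i)) (C.v C.r) < 0 := by
        rw [hdar]
        exact mul_neg_of_neg_of_pos hκneg hrpos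
      have hfj : ¬ dotp (C.v (C.src j)) (C.v C.r) < 0 := by
        rw [hdbr]
        push_neg
        exact le_of_lt (mul_pos (mul_pos_of_neg_of_neg hcneg hκneg) hrpos)
      have htheta : C.theta j - C.theta i = ((C.rho j : ℝ) - (C.rho i : ℝ)) + (2*(n:ℝ)+2) := by
        unfold theta
        rw [if_pos hfi, if_neg hfj]
        ring
      have hb : 0 < C.theta j - C.theta i := by
        rw [htheta]
        linarith
      rw [sign_pos hb, hsd, hTij]
      decide
    · -- κ > 0 : T i j = 1
      have hcak0 : cross (C.v (C.src i)) (C.v k₀) ≠ 0 := by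
        rw [hcak]
        exact mul_ne_zero (ne_of_gt hκpos) hk₀c
      have hcbk0 : cross (C.v (C.src j)) (C.v k₀) ≠ 0 := by
        rw [hcbk]
        exact mul_ne_zero (mul_ne_zero hc0 hκ0) hk₀c
      have hTik : C.T i k₀ = 1 := by
        rw [C.transfer hi k₀ hk₀v hcak0, ← C.exact_H hcak0, hcak, sign_mul, sign_pos hκpos,
          hsr, mul_one]
      have hTjk : C.T j k₀ = -1 := by
        rw [C.transfer hj k₀ hk₀v hcbk0, ← C.exact_H hcbk0, hcbk, sign_mul,
          sign_neg (mul_neg_of_neg_of_pos hcneg hκpos), hsr, mul_one]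
      have hTkj : C.T k₀ j = 1 := by rw [C.Tflip, hTjk]; decide
      have hTij : C.T i j = 1 := C.strictrans hi hk₀nl hj hTik hTkj
      have hfi : ¬ dotp (C.v (C.src i)) (C.v C.r) < 0 := by
        rw [hdar]
        push_neg
        exact le_of_lt (mul_pos hκpos hrpos)
      have hfj : dotp (C.v (C.src j)) (C.v C.r) < 0 := by
        rw [hdbr]
        exact mul_neg_of_neg_of_pos (mul_neg_of_neg_of_pos hcneg hκpos) hrpos
      have htheta : C.theta j - C.theta i = ((C.rho j : ℝ) - (C.rho i : ℝ)) - (2*(n:ℝ)+2) := by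
        unfold theta
        rw [if_neg hfi, if_pos hfj]
        ring
      have hb : C.theta j - C.theta i < 0 := by
        rw [htheta]
        linarith
      rw [sign_neg hb, hsd, hTij]
      try decide
  · -- same orientation case
    have hdpos : 0 < dotp (C.v (C.src i)) (C.v (C.src j)) := by
      rw [hdot]
      exact mul_pos hcpos hpos
    have hflag : dotp (C.v (C.src j)) (C.v C.r) = c * dotp (C.v (C.src i)) (C.v C.r) := by
      rw [hc, dotp_smul_left]
    have hiff : (dotp (C.v (C.src j)) (C.v C.r) < 0 ↔ dotp (C.v (C.src i)) (C.v C.r) < 0) := by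
      rw [hflag]
      constructor <;> intro h <;> nlinarith
    have htheta : C.theta j - C.theta i = (C.rho j : ℝ) - (C.rho i : ℝ) := by
      unfold theta
      by_cases hf : dotp (C.v (C.src i)) (C.v C.r) < 0
      · rw [if_pos hf, if_pos (hiff.mpr hf)]
        ring
      · rw [if_neg hf, if_neg (fun hh => hf (hiff.mp hh))]
        ring
    rw [htheta, sign_pos hdpos, mul_one]
    exact C.sign_rho hi hj


/-! ### The perturbed family -/

open scoped Classical in
noncomputable def mfac (i : Fin n) (t : ℝ) : ℝ := if C.v i ≠ 0 then 1 else t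

noncomputable def wcol (t : ℝ) (i : Fin n) : ℝ × ℝ :=
  C.mfac i t • (C.v (C.src i) + (t * C.theta i) • Jv (C.v (C.src i)))

lemma mfac_pos {i : Fin n} {t : ℝ} (ht : 0 < t) : 0 < C.mfac i t := by
  unfold mfac
  split <;> norm_num
  exact ht

lemma wcol_tendsto (i : Fin n) : Tendsto (fun t => C.wcol t i) (𝓝 0) (𝓝 (C.v i)) := by
  have hcont : Continuous (fun t : ℝ => C.wcol t i) := by
    unfold wcol mfac
    by_cases h : C.v i ≠ 0
    · simp only [if_pos h]
      fun_prop
    · simp only [if_neg h]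
      fun_prop
  have hval : C.wcol 0 i = C.v i := by
    unfold wcol mfac
    by_cases h : C.v i ≠ 0
    · simp [h, C.src_self h]
    · push_neg at h
      simp [h]
  have := hcont.tendsto 0
  rwa [hval] at this

lemma wcol_loop {i : Fin n} (hi : ¬ Nonloop C.T i) (t : ℝ) : C.wcol t i = 0 := by
  have h1 : C.v i = 0 := C.loop_v hi
  have h2 : C.src i = i := C.src_loop hi
  unfold wcol
  rw [h2, h1]
  simp [Jv]

lemma wcol_sign :
    ∀ᶠ t in 𝓝[>] (0:ℝ), ∀ i j, SignType.sign (cross (C.wcol t i) (C.wcol t j)) = C.T i j := by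
  rw [eventually_all]
  intro i
  rw [eventually_all]
  intro j
  by_cases hi : Nonloop C.T i
  swap
  · apply Filter.Eventually.of_forall
    intro t
    rw [C.wcol_loop hi t, cross_zero_left]
    unfold Nonloop at hi
    push_neg at hi
    rw [hi j, sign_zero]
  by_cases hj : Nonloop C.T j
  swap
  · apply Filter.Eventually.of_forall
    intro t
    rw [C.wcol_loop hj t, cross_zero_right]
    unfold Nonloop at hj
    push_neg at hj
    rw [C.Tflip, hj i, sign_zero, neg_zero]
  -- both nonloops
  have hexp : ∀ t : ℝ, cross (C.wcol t i) (C.wcol t j) =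
      (C.mfac i t * C.mfac j t) *
        ((1 + (t * C.theta i) * (t * C.theta j)) * cross (C.v (C.src i)) (C.v (C.src j))
          + (t * C.theta j - t * C.theta i) * dotp (C.v (C.src i)) (C.v (C.src j))) := by
    intro t
    unfold wcol
    rw [cross_smul_left, cross_smul_right, cross_expand]
    ring
  by_cases hcr : cross (C.v (C.src i)) (C.v (C.src j)) = 0
  · -- parallel case: exact for every t > 0
    apply eventually_nhdsWithin_of_forall
    intro t ht
    rw [Set.mem_Ioi] at ht
    rw [hexp t, hcr, mul_zero, zero_add]
    have h1 : t * C.theta j - t * C.theta i = t * (C.theta j - C.theta i) := by ring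
    rw [h1]
    rw [show (C.mfac i t * C.mfac j t) * ((t * (C.theta j - C.theta i)) *
        dotp (C.v (C.src i)) (C.v (C.src j)))
      = ((C.mfac i t * C.mfac j t) * t) * ((C.theta j - C.theta i) *
        dotp (C.v (C.src i)) (C.v (C.src j))) from by ring]
    rw [sign_mul, sign_pos (mul_pos (mul_pos (C.mfac_pos ht) (C.mfac_pos ht)) ht), one_mul,
      sign_mul]
    exact C.B_master hi hj hcr
  · -- transversal case
    have hFc : Continuous (fun t : ℝ =>
        (1 + (t * C.theta i) * (t * C.theta j)) * cross (C.v (C.src i)) (C.v (C.src j))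
          + (t * C.theta j - t * C.theta i) * dotp (C.v (C.src i)) (C.v (C.src j))) := by
      fun_prop
    have hF0 : ((1 + ((0:ℝ) * C.theta i) * (0 * C.theta j)) * cross (C.v (C.src i)) (C.v (C.src j))
          + (0 * C.theta j - 0 * C.theta i) * dotp (C.v (C.src i)) (C.v (C.src j)))
        = cross (C.v (C.src i)) (C.v (C.src j)) := by ring
    have hT := hFc.tendsto 0
    rw [hF0] at hT
    have hsgn : ∀ᶠ t in 𝓝 (0:ℝ), SignType.sign
        ((1 + (t * C.theta i) * (t * C.theta j)) * cross (C.v (C.src i)) (C.v (C.src j))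
          + (t * C.theta j - t * C.theta i) * dotp (C.v (C.src i)) (C.v (C.src j)))
        = SignType.sign (cross (C.v (C.src i)) (C.v (C.src j))) := by
      rcases lt_or_gt_of_ne hcr with hneg | hpos
      · filter_upwards [hT.eventually_lt_const hneg] with t ht
        rw [sign_neg ht, sign_neg hneg]
      · filter_upwards [hT.eventually_const_lt hpos] with t ht
        rw [sign_pos ht, sign_pos hpos]
    have hmem : ∀ᶠ t in 𝓝[>] (0:ℝ), t ∈ Set.Ioi (0:ℝ) :=
      eventually_mem_nhdsWithin
    filter_upwards [nhdsWithin_le_nhds hsgn, hmem] with t hsg ht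
    rw [Set.mem_Ioi] at ht
    rw [hexp t, sign_mul, hsg,
      sign_pos (mul_pos (C.mfac_pos ht) (C.mfac_pos ht)), one_mul]
    exact C.A_master hi hj hcr

end Ctx

/-! ### Normalization wrapper -/

lemma st_cast_ne_zero {s : SignType} (h : s ≠ 0) : ((s : ℝ)) ≠ 0 := by
  rcases st_cases s with h0 | h0 | h0 <;> subst h0 <;> simp_all

lemma st_cast_sq {s : SignType} (h : s ≠ 0) : ((s : ℝ)) * ((s : ℝ)) = 1 := by
  rcases st_cases s with h0 | h0 | h0 <;> subst h0 <;> simp_all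

lemma sign_neg_eq (x : ℝ) : SignType.sign (-x) = - SignType.sign x := by
  rcases lt_trichotomy x 0 with h | h | h
  · rw [sign_neg h, sign_pos (by linarith : (0:ℝ) < -x)]
    decide
  · subst h; simp
  · rw [sign_pos h, sign_neg (by linarith : -x < (0:ℝ))]
    try decide

lemma sign_cast_mul {s : SignType} (h : s ≠ 0) (x : ℝ) :
    SignType.sign (((s : ℝ)) * x) = s * SignType.sign x := by
  rcases st_cases s with h0 | h0 | h0 <;> subst h0
  · exact absurd rfl h
  · simp
  · have hc : (((-1 : SignType) : ℝ)) = -1 := by simp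
    rw [hc, show (-1 : ℝ) * x = -x by ring, sign_neg_eq]
    rcases st_cases (SignType.sign x) with h1 | h1 | h1 <;> rw [h1] <;> decide

lemma main_construction {n : ℕ} (T : Fin n → Fin n → SignType) (v : Fin n → ℝ × ℝ)
    (halt : ∀ i j, T i j = - T j i) (hgp : GP T)
    (hH : ∀ i j, SignType.sign (cross (v i) (v j)) = T i j ∨
      SignType.sign (cross (v i) (v j)) = 0)
    (hex : ∃ p q, cross (v p) (v q) ≠ 0) :
    ∃ w : ℝ → Fin n → ℝ × ℝ,
      (∀ i, Tendsto (fun t => w t i) (𝓝 0) (𝓝 (v i))) ∧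
      (∀ᶠ t in 𝓝[>] (0:ℝ), ∀ i j, SignType.sign (cross (w t i) (w t j)) = T i j) := by
  classical
  obtain ⟨r, q, hrq⟩ := hex
  have hvr : v r ≠ 0 := by
    intro h0
    rw [h0] at hrq
    exact hrq (Ctx.cross_zero_left _)
  have hTrq : T r q ≠ 0 := by
    rcases hH r q with h1 | h1
    · rw [← h1]
      simpa [sign_eq_zero_iff] using hrq
    · exact absurd (sign_eq_zero_iff.mp h1) hrq
  set σ : Fin n → SignType := fun i =>
    if T r i ≠ 0 then T r i else if T i q * T r q ≠ 0 then T i q * T r q else 1 with hσdef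
  have hσ : ∀ i, σ i ≠ 0 := by
    intro i
    rw [hσdef]
    dsimp only
    split
    · assumption
    · split
      · assumption
      · decide
  have hTrr : T r r = 0 := T_diag halt r
  have hσr : σ r = 1 := by
    rw [hσdef]
    dsimp only
    rw [if_neg (by rw [hTrr]; simp), if_pos (by rw [st_sq hTrq]; decide), st_sq hTrq]
  -- the normalized context
  set T' : Fin n → Fin n → SignType := fun i j => σ i * σ j * T i j with hT'def
  set v' : Fin n → ℝ × ℝ := fun i => ((σ i : ℝ)) • v i with hv'def
  have hcross' : ∀ i j, cross (v' i) (v' j) = ((σ i : ℝ)) * (((σ j : ℝ)) * cross (v i) (v j)) := by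
    intro i j
    rw [hv'def]
    dsimp only
    rw [cross_smul_left, cross_smul_right]
  have hsign' : ∀ i j, SignType.sign (cross (v' i) (v' j))
      = σ i * (σ j * SignType.sign (cross (v i) (v j))) := by
    intro i j
    rw [hcross' i j, sign_cast_mul (hσ i), sign_cast_mul (hσ j)]
  have hnl : ∀ i, Nonloop T' i ↔ Nonloop T i := by
    intro i
    constructor
    · rintro ⟨k, hk⟩
      refine ⟨k, fun h0 => hk ?_⟩
      rw [hT'def]
      dsimp only
      rw [h0, mul_zero]
    · rintro ⟨k, hk⟩
      refine ⟨k, fun h0 => hk ?_⟩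
      rw [hT'def] at h0
      dsimp only at h0
      rcases mul_eq_zero.mp h0 with h1 | h1
      · rcases mul_eq_zero.mp h1 with h2 | h2
        · exact absurd h2 (hσ i)
        · exact absurd h2 (hσ k)
      · exact h1
  have f1 : ∀ i j, T' i j = - T' j i := by
    intro i j
    rw [hT'def]
    dsimp only
    rw [halt i j, mul_neg]
    congr 1
    ac_rfl
  have f2 : GP T' := by
    rw [hT'def]
    exact GP.flip hgp σ hσ
  have f3 : ∀ i j, SignType.sign (cross (v' i) (v' j)) = T' i j ∨
      SignType.sign (cross (v' i) (v' j)) = 0 := by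
    intro i j
    rw [hsign']
    rcases hH i j with h1 | h1
    · left
      rw [h1, hT'def]
      dsimp only
      ac_rfl
    · right
      rw [h1, mul_zero, mul_zero]
  have f4 : ∃ p' q', cross (v' p') (v' q') ≠ 0 := by
    refine ⟨r, q, ?_⟩
    rw [hcross' r q]
    exact mul_ne_zero (st_cast_ne_zero (hσ r)) (mul_ne_zero (st_cast_ne_zero (hσ q)) hrq)
  have f5 : v' r ≠ 0 := by
    rw [hv'def]
    dsimp only
    exact smul_ne_zero (st_cast_ne_zero (hσ r)) hvr
  have f6 : ∀ i, T' r i ≠ -1 := by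
    intro i
    rw [hT'def]
    dsimp only
    rw [hσr, one_mul]
    by_cases h0 : T r i ≠ 0
    · rw [hσdef]
      dsimp only
      rw [if_pos h0, st_sq h0]
      decide
    · push_neg at h0
      rw [h0, mul_zero]
      decide
  have f7 : ∀ i, Nonloop T' i → T' r i = 0 → ∀ k, T' i k = T' r k := by
    intro i hnl' hri0 k
    have hTri : T r i = 0 := by
      rw [hT'def] at hri0
      dsimp only at hri0
      rcases mul_eq_zero.mp hri0 with h1 | h1
      · rcases mul_eq_zero.mp h1 with h2 | h2
        · exact absurd h2 (hσ r)
        · exact absurd h2 (hσ i)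
      · exact h1
    have hinl : Nonloop T i := (hnl i).mp hnl'
    have hTir : T i r = 0 := by rw [halt, hTri, neg_zero]
    obtain ⟨s, hs0, hsk⟩ := par0 hgp hinl ⟨q, hTrq⟩ hTir
    have hcond : T i q * T r q ≠ 0 := by
      rw [hsk q, mul_assoc, st_sq hTrq, mul_one]
      exact hs0
    have hσi : σ i = s := by
      rw [hσdef]
      dsimp only
      rw [if_neg (by rw [hTri]; simp), if_pos hcond, hsk q, mul_assoc, st_sq hTrq, mul_one]
    rw [hT'def]
    dsimp only
    rw [hσr, one_mul, hσi, hsk k]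
    calc s * σ k * (s * T r k) = (s * s) * (σ k * T r k) := by ac_rfl
      _ = σ k * T r k := by rw [st_sq hs0, one_mul]
  let C : Ctx n := ⟨T', v', r, f1, f2, f3, f4, f5, f6, f7⟩
  have hCT : ∀ i j, C.T i j = σ i * σ j * T i j := fun i j => rfl
  have hCv : ∀ i, C.v i = ((σ i : ℝ)) • v i := fun i => rfl
  refine ⟨fun t i => ((σ i : ℝ)) • C.wcol t i, ?_, ?_⟩
  · intro i
    have h2 := (C.wcol_tendsto i).const_smul ((σ i : ℝ))
    have h4 : ((σ i : ℝ)) • C.v i = v i := by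
      rw [hCv i, smul_smul, st_cast_sq (hσ i), one_smul]
    rw [h4] at h2
    exact h2
  · filter_upwards [C.wcol_sign] with t ht i j
    have h3 := ht i j
    rw [cross_smul_left, cross_smul_right, sign_cast_mul (hσ i), sign_cast_mul (hσ j), h3,
      show C.T i j = T' i j from rfl, hT'def]
    dsimp only
    calc σ i * (σ j * (σ i * σ j * T i j)) = (σ i * σ i) * ((σ j * σ j) * T i j) := by ac_rfl
      _ = T i j := by rw [st_sq (hσ i), st_sq (hσ j), one_mul, one_mul]


/-! ### Matrix glue -/

noncomputable def colv {n : ℕ} (A : Matrix (Fin 2) (Fin n) ℝ) (i : Fin n) : ℝ × ℝ :=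
  (A 0 i, A 1 i)

lemma pair_ratio {u w : Fin 2 → ℝ} (hu : ¬ (u = 0))
    (h : cross (u 0, u 1) (w 0, w 1) = 0) : ∃ c : ℝ, w = c • u := by
  have hu' : ((u 0, u 1) : ℝ × ℝ) ≠ 0 := by
    intro h0
    apply hu
    funext k
    fin_cases k
    · exact congrArg Prod.fst h0
    · exact congrArg Prod.snd h0
  obtain ⟨c, hc⟩ := cross_ratio hu' h
  refine ⟨c, ?_⟩
  funext k
  fin_cases k
  · simpa using congrArg Prod.fst hc
  · simpa using congrArg Prod.snd hc

lemma rank_iff {n : ℕ} (A : Matrix (Fin 2) (Fin n) ℝ) :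
    A.rank = 2 ↔ ∃ i j, cross (colv A i) (colv A j) ≠ 0 := by
  have hcol : ∀ i, A.mulVec (Pi.single i 1) = fun k => A k i := by
    intro i
    rw [Matrix.mulVec_single_one]
    rfl
  constructor
  · intro hrk
    by_contra hc
    push_neg at hc
    have hle : LinearMap.range A.mulVecLin ≤
        Submodule.span ℝ (Set.range A.transpose) := by
      rw [Matrix.range_mulVecLin]
      exact le_rfl
    by_cases hz : ∀ i, (fun k => A k i) = (0 : Fin 2 → ℝ)
    · -- all columns zero
      have h1 : Submodule.span ℝ (Set.range A.transpose) ≤ ⊥ := by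
        rw [Submodule.span_le]
        rintro x ⟨i, rfl⟩
        simp only [SetLike.mem_coe, Submodule.mem_bot]
        exact hz i
      have h2 : Module.finrank ℝ (LinearMap.range A.mulVecLin) = 0 := by
        have := le_bot_iff.mp (le_trans hle h1)
        rw [this]
        simp
      rw [Matrix.rank, h2] at hrk
      omega
    · push_neg at hz
      obtain ⟨i₀, hi₀⟩ := hz
      have h1 : Submodule.span ℝ (Set.range A.transpose) ≤
          Submodule.span ℝ {(fun k => A k i₀ : Fin 2 → ℝ)} := by
        rw [Submodule.span_le]
        rintro x ⟨j, rfl⟩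
        have hcr : cross ((fun k => A k i₀) 0, (fun k => A k i₀) 1)
            ((fun k => A k j) 0, (fun k => A k j) 1) = 0 := by
          have := hc i₀ j
          unfold colv at this
          exact this
        obtain ⟨c, hcc⟩ := pair_ratio (w := fun k => A k j) hi₀ hcr
        have : A.transpose j = c • (fun k => A k i₀) := hcc
        rw [SetLike.mem_coe, this]
        exact Submodule.smul_mem _ c (Submodule.mem_span_singleton_self _)
      have h2 : Module.finrank ℝ (LinearMap.range A.mulVecLin) ≤ 1 := by
        calc Module.finrank ℝ (LinearMap.range A.mulVecLin)
            ≤ Module.finrank ℝ (Submodule.span ℝ {(fun k => A k i₀ : Fin 2 → ℝ)}) :=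
              Submodule.finrank_mono (le_trans hle h1)
          _ = 1 := finrank_span_singleton hi₀
      rw [Matrix.rank] at hrk
      omega
  · rintro ⟨i, j, hij⟩
    have hli : LinearIndependent ℝ ![(fun k => A k i : Fin 2 → ℝ), (fun k => A k j)] := by
      rw [LinearIndependent.pair_iff]
      intro s t hst
      have h0 := congrFun hst 0
      have h1 := congrFun hst 1
      simp only [Pi.add_apply, Pi.smul_apply, smul_eq_mul, Pi.zero_apply] at h0 h1
      unfold colv cross at hij
      dsimp only at hij
      have hs0 : s * (A 0 i * A 1 j - A 0 j * A 1 i) = 0 := by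
        linear_combination A 1 j * h0 - A 0 j * h1
      have ht0 : t * (A 0 i * A 1 j - A 0 j * A 1 i) = 0 := by
        linear_combination A 0 i * h1 - A 1 i * h0
      constructor
      · rcases mul_eq_zero.mp hs0 with h | h
        · exact h
        · exact absurd h hij
      · rcases mul_eq_zero.mp ht0 with h | h
        · exact h
        · exact absurd h hij
    have hspan : Submodule.span ℝ
        (Set.range ![(fun k => A k i : Fin 2 → ℝ), (fun k => A k j)]) ≤
        LinearMap.range A.mulVecLin := by
      rw [Submodule.span_le]
      rintro x ⟨l, rfl⟩
      fin_cases l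
      · exact ⟨Pi.single i 1, by rw [Matrix.mulVecLin_apply, hcol i]; rfl⟩
      · exact ⟨Pi.single j 1, by rw [Matrix.mulVecLin_apply, hcol j]; rfl⟩
    have h2 : 2 ≤ A.rank := by
      calc 2 = Module.finrank ℝ (Submodule.span ℝ
            (Set.range ![(fun k => A k i : Fin 2 → ℝ), (fun k => A k j)])) := by
            rw [finrank_span_eq_card hli]
            simp
        _ ≤ A.rank := Submodule.finrank_mono hspan
    have h3 := Matrix.rank_le_height A
    omega

lemma chiMat_eq_sign {n : ℕ} (A : Matrix (Fin 2) (Fin n) ℝ) (i j : Fin n) :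
    chiMat A i j = SignType.sign (cross (colv A i) (colv A j)) := rfl

/-- Matrices with the same row space have, up to global sign, the same chirotope. -/
lemma rowspace_chi {n : ℕ} (A B : Matrix (Fin 2) (Fin n) ℝ) (hA : A.rank = 2)
    (hB : B.rank = 2)
    (h : LinearMap.range A.vecMulLinear = LinearMap.range B.vecMulLinear) :
    (∀ i j, chiMat B i j = chiMat A i j) ∨ (∀ i j, chiMat B i j = - chiMat A i j) := by
  -- every row of B is in the row space of A
  have hrow : ∀ k : Fin 2, ∃ g : Fin 2 → ℝ, Matrix.vecMul g A = B k := by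
    intro k
    have : B k ∈ LinearMap.range A.vecMulLinear := by
      rw [h]
      exact ⟨Pi.single k 1, by rw [Matrix.vecMulLinear_apply, Matrix.single_one_vecMul]; rfl⟩
    obtain ⟨g, hg⟩ := this
    exact ⟨g, by rw [← Matrix.vecMulLinear_apply]; exact hg⟩
  obtain ⟨g0, hg0⟩ := hrow 0
  obtain ⟨g1, hg1⟩ := hrow 1
  set G : Matrix (Fin 2) (Fin 2) ℝ := Matrix.of ![g0, g1] with hGdef
  have hBG0 : ∀ (i : Fin n), B 0 i = G 0 0 * A 0 i + G 0 1 * A 1 i := by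
    intro i
    rw [← hg0]
    simp [Matrix.vecMul, dotProduct, Fin.sum_univ_two, hGdef]
  have hBG1 : ∀ (i : Fin n), B 1 i = G 1 0 * A 0 i + G 1 1 * A 1 i := by
    intro i
    rw [← hg1]
    simp [Matrix.vecMul, dotProduct, Fin.sum_univ_two, hGdef]
  have hkey : ∀ i j, cross (colv B i) (colv B j) = G.det * cross (colv A i) (colv A j) := by
    intro i j
    unfold colv cross
    rw [hBG0 i, hBG1 j, hBG0 j, hBG1 i, Matrix.det_fin_two]
    ring
  have hGdet : G.det ≠ 0 := by
    intro h0
    obtain ⟨i, j, hij⟩ := (rank_iff B).mp hB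
    apply hij
    rw [hkey i j, h0, zero_mul]
  rcases lt_or_gt_of_ne hGdet with hneg | hpos
  · right
    intro i j
    rw [chiMat_eq_sign, chiMat_eq_sign, hkey i j, sign_mul, sign_neg hneg]
    rcases st_cases (SignType.sign (cross (colv A i) (colv A j))) with h0 | h0 | h0 <;>
      rw [h0] <;> decide
  · left
    intro i j
    rw [chiMat_eq_sign, chiMat_eq_sign, hkey i j, sign_mul, sign_pos hpos, one_mul]

end GrBoundary

open GrBoundary in
lemma chi_scaled {n : ℕ} {f g : Fin n → Fin n → SignType}
    (h : (∀ i j, f i j = g i j) ∨ (∀ i j, f i j = - g i j)) :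
    ∃ d : SignType, (d = 1 ∨ d = -1) ∧ ∀ i j, f i j = d * g i j := by
  rcases h with h1 | h1
  · exact ⟨1, Or.inl rfl, fun i j => by rw [h1 i j, one_mul]⟩
  · refine ⟨-1, Or.inr rfl, fun i j => ?_⟩
    rw [h1 i j, neg_one_mul]

open GrBoundary Filter Topology in
/-- If `M` covers `N` in `MacP(2,n)`, then `μ⁻¹(N)` is contained in the boundary of the
closure of `μ⁻¹(M)` in `Gr(2, ℝⁿ)`. -/
theorem muFiber_subset_boundary {n : ℕ} (N M : Chirotope2 n) (h : OMCovers N M) :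
    muFiber N ⊆ closure (muFiber M) \ muFiber M := by
  obtain ⟨⟨hle, hnle⟩, -⟩ := h
  intro x hx
  obtain ⟨A, hxA, hchiA⟩ := hx
  obtain ⟨ε, hε, hNM⟩ := hle
  obtain ⟨δ, hδ, hchi⟩ := chi_scaled hchiA
  have hδ0 : δ ≠ 0 := by rcases hδ with h1 | h1 <;> rw [h1] <;> decide
  subst hxA
  constructor
  · -- x lies in the closure of the fiber of M
    set c : SignType := δ * ε with hcdef
    have hc : c = 1 ∨ c = -1 := by
      rcases hδ with h1 | h1 <;> rcases hε with h2 | h2 <;> rw [hcdef, h1, h2] <;> decide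
    have hc0 : c ≠ 0 := by rcases hc with h1 | h1 <;> rw [h1] <;> decide
    set T : Fin n → Fin n → SignType := fun i j => c * M.χ i j with hTdef
    have halt : ∀ i j, T i j = - T j i := by
      intro i j
      rw [hTdef]
      dsimp only
      rw [M.alt i j, mul_neg]
    have hgp : GP T := by
      intro x' y0 y1 y2
      have e : ∀ a b a' b' : Fin n, T a b * T a' b' = M.χ a b * M.χ a' b' := by
        intro a b a' b'
        rw [hTdef]
        dsimp only
        calc (c * M.χ a b) * (c * M.χ a' b') = (c * c) * (M.χ a b * M.χ a' b') := by ac_rfl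
          _ = M.χ a b * M.χ a' b' := by rw [st_sq hc0, one_mul]
      rw [e y0 x' y1 y2, e y1 x' y0 y2, e y2 x' y0 y1]
      exact M.gp x' y0 y1 y2
    have hH : ∀ i j, SignType.sign (cross (colv A.1 i) (colv A.1 j)) = T i j ∨
        SignType.sign (cross (colv A.1 i) (colv A.1 j)) = 0 := by
      intro i j
      rw [← chiMat_eq_sign, hchi i j]
      rcases hNM i j with h1 | h1
      · right
        rw [h1, mul_zero]
      · left
        rw [h1, hTdef]
        dsimp only
        rw [hcdef, mul_assoc]
    have hex : ∃ p q, cross (colv A.1 p) (colv A.1 q) ≠ 0 := (rank_iff A.1).mp A.2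
    obtain ⟨w, hwt, hws⟩ := main_construction T (colv A.1) halt hgp hH hex
    set Bm : ℝ → Matrix (Fin 2) (Fin n) ℝ :=
      fun t => Matrix.of ![fun i => (w t i).1, fun i => (w t i).2] with hBdef
    have hBcol : ∀ t i, colv (Bm t) i = w t i := by
      intro t i
      rfl
    have hchiB : ∀ᶠ t in 𝓝[>](0:ℝ), ∀ i j, chiMat (Bm t) i j = T i j := by
      filter_upwards [hws] with t ht i j
      rw [chiMat_eq_sign, hBcol, hBcol]
      exact ht i j
    obtain ⟨i0, j0, hM0⟩ := M.nonzero
    have hT0 : T i0 j0 ≠ 0 := by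
      rw [hTdef]
      exact mul_ne_zero hc0 hM0
    have hBt : Tendsto Bm (𝓝[>](0:ℝ)) (𝓝 A.1) := by
      apply Tendsto.mono_left _ nhdsWithin_le_nhds
      refine tendsto_pi_nhds.mpr ?_
      intro k
      refine tendsto_pi_nhds.mpr ?_
      intro i
      have hfst := (continuous_fst.tendsto _).comp (hwt i)
      have hsnd := (continuous_snd.tendsto _).comp (hwt i)
      fin_cases k
      · exact hfst
      · exact hsnd
    rw [mem_closure_iff]
    intro U hU hxU
    have hpre : IsOpen ((Quotient.mk (grSetoid n)) ⁻¹' U) := by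
      apply hU.preimage
      exact continuous_quotient_mk'
    obtain ⟨O, hO, hOeq⟩ := isOpen_induced_iff.mp hpre
    have hAO : A.1 ∈ O := by
      have h1 : A ∈ (Quotient.mk (grSetoid n)) ⁻¹' U := hxU
      rw [← hOeq] at h1
      exact h1
    have hBO : ∀ᶠ t in 𝓝[>](0:ℝ), Bm t ∈ O := hBt (hO.mem_nhds hAO)
    obtain ⟨t, hts, htO⟩ := (hchiB.and hBO).exists
    have hrk : (Bm t).rank = 2 := by
      rw [rank_iff]
      refine ⟨i0, j0, fun hz => hT0 ?_⟩
      rw [← hts i0 j0, chiMat_eq_sign, hz, sign_zero]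
    refine ⟨Quotient.mk (grSetoid n) ⟨Bm t, hrk⟩, ?_, ?_⟩
    · have h2 : (⟨Bm t, hrk⟩ : {A : Matrix (Fin 2) (Fin n) ℝ // A.rank = 2}) ∈
          Subtype.val ⁻¹' O := htO
      rw [hOeq] at h2
      exact h2
    · refine ⟨⟨Bm t, hrk⟩, rfl, ?_⟩
      rcases hc with h1 | h1
      · left
        intro i j
        rw [hts i j, hTdef]
        dsimp only
        rw [h1, one_mul]
      · right
        intro i j
        rw [hts i j, hTdef]
        dsimp only
        rw [h1, neg_one_mul]
  · -- x does not lie in the fiber of M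
    intro hxM
    obtain ⟨A', hxA', hchiA'⟩ := hxM
    have heq : Quotient.mk (grSetoid n) A = Quotient.mk (grSetoid n) A' := hxA'
    have hsR : LinearMap.range (Matrix.vecMulLinear (A : Matrix (Fin 2) (Fin n) ℝ)) =
        LinearMap.range (Matrix.vecMulLinear (A' : Matrix (Fin 2) (Fin n) ℝ)) :=
      Quotient.exact heq
    obtain ⟨d, hd, hdchi⟩ := chi_scaled hchiA'
    have hd0 : d ≠ 0 := by rcases hd with h1 | h1 <;> rw [h1] <;> decide
    obtain ⟨e, he, hechi⟩ := chi_scaled (rowspace_chi A.1 A'.1 A.2 A'.2 hsR)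
    apply hnle
    refine ⟨d * e * δ, ?_, ?_⟩
    · rcases hd with h1 | h1 <;> rcases he with h2 | h2 <;> rcases hδ with h3 | h3 <;>
        rw [h1, h2, h3] <;> decide
    · intro i j
      right
      calc M.χ i j = d * (d * M.χ i j) := by rw [← mul_assoc, st_sq hd0, one_mul]
        _ = d * chiMat A'.1 i j := by rw [hdchi i j]
        _ = d * (e * chiMat A.1 i j) := by rw [hechi i j]
        _ = d * (e * (δ * N.χ i j)) := by rw [hchi i j]
        _ = d * e * δ * N.χ i j := by ac_rfl
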